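/- (Tension between efficiency and speaker fairness) There exists an instance in which every schedule minimizing speaker unfairness Ψ^S has strictly smaller TEP than the efficiency-maximizing schedule. Concretely: with one participant p, two talks t_1, t_2 with V_p(t_1) = 1, V_p(t_2) = 0.5, and three slots with A_p = (1, 0.75, 0.8): the efficiency-maximizing schedule gives Γ(t_1)=s_1, Γ(t_2)=s_3 with TEP = 1.4 and speaker satisfactions (NEC) of 1 and 0.8; while the schedule Γ'(t_1)=s_3, Γ'(t_2)=s_2 achieves the minimum possible speaker unfairness Ψ^S = 0.05 (NEC values 0.8 and 0.75) but has TEP = 1.175 < 1.4. -/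

import Mathlib

namespace Stmt6

/-- Interest scores of the single participant for the two talks. -/
noncomputable def V : Fin 2 → ℝ := ![1, 0.5]

/-- Availability scores of the single participant over the three slots. -/
noncomputable def A : Fin 3 → ℝ := ![1, 0.75, 0.8]

/-- Expected crowd at talk `t` under schedule `Γ`. -/
noncomputable def EC (t : Fin 2) (Γ : Fin 2 → Fin 3) : ℝ := V t * A (Γ t)

/-- Ideal expected crowd at talk `t` (best slot). -/
noncomputable def IEC (t : Fin 2) : ℝ := V t * max (A 0) (max (A 1) (A 2))

/-- Normalized expected crowd. -/
noncomputable def NEC (t : Fin 2) (Γ : Fin 2 → Fin 3) : ℝ := EC t Γ / IEC t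

/-- Speaker unfairness. -/
noncomputable def Ψ (Γ : Fin 2 → Fin 3) : ℝ :=
  max (NEC 0 Γ) (NEC 1 Γ) - min (NEC 0 Γ) (NEC 1 Γ)

/-- Total expected participation. -/
noncomputable def TEP (Γ : Fin 2 → Fin 3) : ℝ := V 0 * A (Γ 0) + V 1 * A (Γ 1)

/-- The efficiency-maximizing schedule: t₁ ↦ s₁, t₂ ↦ s₃. -/
def Γ₀ : Fin 2 → Fin 3 := ![0, 2]

/-- The speaker-fair schedule: t₁ ↦ s₃, t₂ ↦ s₂. -/
def Γ' : Fin 2 → Fin 3 := ![2, 1]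

/-- tension between efficiency and speaker fairness. -/
theorem efficiency_speaker_fairness_tension :
    Function.Injective Γ₀ ∧ Function.Injective Γ'
    ∧ (∀ Γ : Fin 2 → Fin 3, Function.Injective Γ → TEP Γ ≤ TEP Γ₀)
    ∧ TEP Γ₀ = 1.4 ∧ NEC 0 Γ₀ = 1 ∧ NEC 1 Γ₀ = 0.8
    ∧ (∀ Γ : Fin 2 → Fin 3, Function.Injective Γ → Ψ Γ' ≤ Ψ Γ)
    ∧ Ψ Γ' = 0.05 ∧ NEC 0 Γ' = 0.8 ∧ NEC 1 Γ' = 0.75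
    ∧ TEP Γ' = 1.175 ∧ TEP Γ' < TEP Γ₀ := by
  have hinj0 : Function.Injective Γ₀ := by decide
  have hinj' : Function.Injective Γ' := by decide
  refine ⟨hinj0, hinj', ?_, ?_, ?_, ?_, ?_, ?_, ?_, ?_, ?_, ?_⟩
  · intro Γ h
    obtain ⟨a, ha⟩ : ∃ a, Γ 0 = a := ⟨_, rfl⟩
    obtain ⟨b, hb⟩ : ∃ b, Γ 1 = b := ⟨_, rfl⟩
    have hab : a ≠ b := ha ▸ hb ▸ fun e => absurd (h e) (by decide)
    fin_cases a <;> fin_cases b <;> simp_all [TEP, Γ₀, V, A] <;> norm_num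
  · norm_num [TEP, Γ₀, V, A, Matrix.cons_val_two, Matrix.vecHead, Matrix.vecTail]
  · norm_num [NEC, EC, IEC, Γ₀, V, A, Matrix.cons_val_two, Matrix.vecHead, Matrix.vecTail]
  · norm_num [NEC, EC, IEC, Γ₀, V, A, Matrix.cons_val_two, Matrix.vecHead, Matrix.vecTail]
  · intro Γ h
    obtain ⟨a, ha⟩ : ∃ a, Γ 0 = a := ⟨_, rfl⟩
    obtain ⟨b, hb⟩ : ∃ b, Γ 1 = b := ⟨_, rfl⟩
    have hab : a ≠ b := ha ▸ hb ▸ fun e => absurd (h e) (by decide)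
    fin_cases a <;> fin_cases b <;> simp_all [Ψ, NEC, EC, IEC, Γ', V, A] <;> norm_num
  · norm_num [Ψ, NEC, EC, IEC, Γ', V, A, Matrix.cons_val_two, Matrix.vecHead, Matrix.vecTail]
  · norm_num [NEC, EC, IEC, Γ', V, A, Matrix.cons_val_two, Matrix.vecHead, Matrix.vecTail]
  · norm_num [NEC, EC, IEC, Γ', V, A, Matrix.cons_val_two, Matrix.vecHead, Matrix.vecTail]
  · norm_num [TEP, Γ', V, A, Matrix.cons_val_two, Matrix.vecHead, Matrix.vecTail]
  · norm_num [TEP, Γ₀, Γ', V, A, Matrix.cons_val_two, Matrix.vecHead, Matrix.vecTail]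


end Stmt6
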